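/- Let G be a finitely generated group, r ≥ 0 a real number, and (Q_n) a sequence of finite-index subgroups of G such that (i) every finite-index subgroup of G contains Q_n for some n, and (ii) d(Q_n) - 1 ≥ r·[G : Q_n] for every n. Then d(H) - 1 ≥ r·[G : H] for every finite-index subgroup H of G; in particular, G has rank gradient at least r. -/

import Mathlib

/-- `minGens G` is `d(G)`, the minimal number of generators of the group `G`. -/
noncomputable def minGens (G : Type*) [Group G] : ℕ :=
  sInf {n : ℕ | ∃ S : Finset G, S.card = n ∧ Subgroup.closure (S : Set G) = ⊤}

open Subgroup
open scoped Pointwise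

section Aux

lemma minGens_eq_rank (G : Type*) [Group G] [Group.FG G] :
    minGens G = Group.rank G := by
  obtain ⟨S, hS1, hS2⟩ := Group.rank_spec G
  have hmem : Group.rank G ∈ {n : ℕ | ∃ S : Finset G, S.card = n ∧ Subgroup.closure (S : Set G) = ⊤} := ⟨S, hS1, hS2⟩
  refine le_antisymm (Nat.sInf_le hmem) ?_
  have hne : {n : ℕ | ∃ S : Finset G, S.card = n ∧ Subgroup.closure (S : Set G) = ⊤}.Nonempty :=
    ⟨S.card, S, rfl, hS2⟩
  obtain ⟨T, hT1, hT2⟩ := Nat.sInf_mem hne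
  calc Group.rank G ≤ T.card := Group.rank_le hT2
    _ = minGens G := hT1

lemma rank_eq_of_mulEquiv {G H : Type*} [Group G] [Group H] [Group.FG G] [Group.FG H]
    (e : G ≃* H) : Group.rank G = Group.rank H :=
  le_antisymm (Group.rank_le_of_surjective e.symm.toMonoidHom e.symm.surjective)
    (Group.rank_le_of_surjective e.toMonoidHom e.surjective)

variable {G : Type*} [Group G]

/-- A "partial Schreier transversal" for `H` with respect to generating set `S`:
`R` contains `1`, has pairwise distinct right cosets, and every non-identity element
has a "parent" edge recorded by `φ` with decreasing level `ℓ`. -/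
def IsPartial (H : Subgroup G) (S R : Finset G) (ℓ : G → ℕ) (φ : G → G × G) : Prop :=
  (1 : G) ∈ R ∧
  (∀ r ∈ R, ∀ r' ∈ R, r * r'⁻¹ ∈ H → r = r') ∧
  ∀ r ∈ R, r ≠ 1 → (φ r).1 ∈ R ∧ (φ r).2 ∈ S ∧ (φ r).1 * (φ r).2 ∈ R ∧
    (((φ r).1 * (φ r).2 = r ∧ ℓ (φ r).1 < ℓ r) ∨ ((φ r).1 = r ∧ ℓ ((φ r).1 * (φ r).2) < ℓ r))

lemma isPartial_card_le {H : Subgroup G} [H.FiniteIndex] {S R : Finset G} {ℓ : G → ℕ}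
    {φ : G → G × G} (hP : IsPartial H S R ℓ φ) : R.card ≤ H.index := by
  haveI : Finite (G ⧸ H) := H.finite_quotient_of_finiteIndex
  haveI : Finite (Quotient (QuotientGroup.rightRel H)) :=
    Finite.of_equiv _ (QuotientGroup.quotientRightRelEquivQuotientLeftRel H).symm
  have hinj : Function.Injective
      (fun r : ↥(R : Set G) => (Quotient.mk'' (r : G) : Quotient (QuotientGroup.rightRel H))) := by
    rintro ⟨r, hr⟩ ⟨r', hr'⟩ h
    have := Quotient.exact' h
    rw [QuotientGroup.rightRel_apply] at this
    -- this : r' * r⁻¹ ∈ H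
    exact Subtype.ext (hP.2.1 r' (by exact_mod_cast hr') r (by exact_mod_cast hr) this).symm
  calc R.card = Nat.card ↥(R : Set G) := by
        rw [Nat.card_coe_set_eq, Set.ncard_coe_finset]
    _ ≤ Nat.card (Quotient (QuotientGroup.rightRel H)) := Nat.card_le_card_of_injective _ hinj
    _ = Nat.card (G ⧸ H) :=
        Nat.card_congr (QuotientGroup.quotientRightRelEquivQuotientLeftRel H)
    _ = H.index := rfl

lemma isPartial_extend [DecidableEq G] {H : Subgroup G} {S R : Finset G} {ℓ : G → ℕ} {φ : G → G × G}
    (hP : IsPartial H S R ℓ φ) (x : G) (hx : ∀ r ∈ R, x * r⁻¹ ∉ H)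
    (p : G × G) (hp2 : p.2 ∈ S)
    (hcase : (p.1 ∈ R ∧ p.1 * p.2 = x) ∨ (p.1 = x ∧ p.1 * p.2 ∈ R)) :
    IsPartial H S (insert x R) (Function.update ℓ x (R.sup ℓ + 1)) (Function.update φ x p) := by
  classical
  have hxR : x ∉ R := fun h => hx x h (by simpa using H.one_mem)
  obtain ⟨h1, h2, h3⟩ := hP
  refine ⟨Finset.mem_insert_of_mem h1, ?_, ?_⟩
  · intro r hr r' hr' hrr'
    rcases Finset.mem_insert.mp hr with h | h <;>
      rcases Finset.mem_insert.mp hr' with h' | h'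
    · rw [h, h']
    · rw [h] at hrr'
      exact absurd hrr' (hx r' h')
    · have hinv : r' * r⁻¹ ∈ H := by
        have := H.inv_mem hrr'
        simpa using this
      rw [h'] at hinv
      exact absurd hinv (hx r h)
    · exact h2 r h r' h' hrr'
  · intro r hr hr1
    rcases Finset.mem_insert.mp hr with rfl | hr
    · rw [Function.update_self]
      rcases hcase with ⟨hp1, hpx⟩ | ⟨hp1, hpx⟩
      · have hp1x : p.1 ≠ r := fun h => hxR (h ▸ hp1)
        refine ⟨Finset.mem_insert_of_mem hp1, hp2, hpx ▸ Finset.mem_insert_self _ _, ?_⟩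
        left
        refine ⟨hpx, ?_⟩
        rw [Function.update_of_ne hp1x, Function.update_self]
        exact Nat.lt_succ_of_le (Finset.le_sup hp1)
      · have hppx : p.1 * p.2 ≠ r := fun h => hxR (h ▸ hpx)
        refine ⟨hp1 ▸ Finset.mem_insert_self _ _, hp2, Finset.mem_insert_of_mem hpx, ?_⟩
        right
        refine ⟨hp1, ?_⟩
        rw [Function.update_of_ne hppx, Function.update_self]
        exact Nat.lt_succ_of_le (Finset.le_sup hpx)
    · have hrx : r ≠ x := fun h => hxR (h ▸ hr)
      rw [Function.update_of_ne hrx]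
      obtain ⟨k1, k2, k3, k4⟩ := h3 r hr hr1
      have e1 : (φ r).1 ≠ x := fun h => hxR (h ▸ k1)
      have e3 : (φ r).1 * (φ r).2 ≠ x := fun h => hxR (h ▸ k3)
      refine ⟨Finset.mem_insert_of_mem k1, k2, Finset.mem_insert_of_mem k3, ?_⟩
      rw [Function.update_of_ne e1, Function.update_of_ne e3, Function.update_of_ne hrx]
      exact k4

lemma exists_schreier_transversal (H : Subgroup G) [H.FiniteIndex] (S : Finset G)
    (hS : closure (S : Set G) = ⊤) :
    ∃ (R : Finset G) (ℓ : G → ℕ) (φ : G → G × G), IsPartial H S R ℓ φ ∧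
      ∀ g : G, ∃ r ∈ R, g * r⁻¹ ∈ H := by
  classical
  set P : ℕ → Prop := fun k => ∃ (R : Finset G) (ℓ : G → ℕ) (φ : G → G × G),
    IsPartial H S R ℓ φ ∧ R.card = k with hPdef
  have hne : {k | P k}.Nonempty := by
    refine ⟨1, {1}, fun _ => 0, fun _ => (1, 1), ⟨Finset.mem_singleton_self 1, ?_, ?_⟩, rfl⟩
    · intro r hr r' hr' _
      rw [Finset.mem_singleton.mp hr, Finset.mem_singleton.mp hr']
    · intro r hr hr1
      exact absurd (Finset.mem_singleton.mp hr) hr1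
  have hbdd : BddAbove {k | P k} := by
    refine ⟨H.index, ?_⟩
    rintro k ⟨R, ℓ, φ, hP, rfl⟩
    exact isPartial_card_le hP
  obtain ⟨R, ℓ, φ, hP, hcard⟩ := Nat.sSup_mem hne hbdd
  refine ⟨R, ℓ, φ, hP, ?_⟩
  by_contra hcon
  push_neg at hcon
  -- the set of covered elements
  set C : Set G := {g | ∃ r ∈ R, g * r⁻¹ ∈ H} with hC
  -- first: if all neighbors of R are covered, everything is covered
  have hstep : ∃ a ∈ R, ∃ s ∈ S, a * s ∉ C ∨ a * s⁻¹ ∉ C := by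
    by_contra hall
    push_neg at hall
    obtain ⟨g, hg⟩ := hcon
    have hgC : g ∈ C := by
      have hg' : g ∈ closure (S : Set G) := hS.symm ▸ mem_top g
      refine closure_induction_right ?_ ?_ ?_ hg'
      · exact ⟨1, hP.1, by simpa using H.one_mem⟩
      · rintro x _ s hs ⟨a, ha, hxa⟩
        obtain ⟨b, hb, hab⟩ := (hall a ha s hs).1
        exact ⟨b, hb, by
          have : x * s * b⁻¹ = (x * a⁻¹) * (a * s * b⁻¹) := by group
          rw [this]; exact H.mul_mem hxa hab⟩
      · rintro x _ s hs ⟨a, ha, hxa⟩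
        obtain ⟨b, hb, hab⟩ := (hall a ha s hs).2
        exact ⟨b, hb, by
          have : x * s⁻¹ * b⁻¹ = (x * a⁻¹) * (a * s⁻¹ * b⁻¹) := by group
          rw [this]; exact H.mul_mem hxa hab⟩
    obtain ⟨b, hb, hgb⟩ := hgC
    exact hg b hb hgb
  obtain ⟨a, ha, s, hs, hcases⟩ := hstep
  have hext : ∃ x, (∀ r ∈ R, x * r⁻¹ ∉ H) ∧ ∃ p : G × G, p.2 ∈ S ∧
      ((p.1 ∈ R ∧ p.1 * p.2 = x) ∨ (p.1 = x ∧ p.1 * p.2 ∈ R)) := by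
    rcases hcases with hc | hc
    · refine ⟨a * s, ?_, (a, s), hs, Or.inl ⟨ha, rfl⟩⟩
      intro r hr hmem
      exact hc ⟨r, hr, hmem⟩
    · refine ⟨a * s⁻¹, ?_, (a * s⁻¹, s), hs, Or.inr ⟨rfl, by simpa using ha⟩⟩
      intro r hr hmem
      exact hc ⟨r, hr, hmem⟩
  obtain ⟨x, hx, p, hp2, hpcase⟩ := hext
  have hxR : x ∉ R := fun h => hx x h (by simpa using H.one_mem)
  have hP' := isPartial_extend hP x hx p hp2 hpcase
  have : R.card + 1 ≤ sSup {k | P k} := by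
    have : P (R.card + 1) :=
      ⟨insert x R, Function.update ℓ x (R.sup ℓ + 1), Function.update φ x p, hP', by rw [Finset.card_insert_of_notMem hxR]⟩
    exact le_csSup hbdd this
  omega

end Aux
set_option maxHeartbeats 1000000 in
lemma rank_schreier {G : Type*} [Group G] [Group.FG G] (H : Subgroup G) [H.FiniteIndex] :
    Group.rank ↥H + H.index ≤ H.index * Group.rank G + 1 := by
  classical
  obtain ⟨S, hScard, hS⟩ := Group.rank_spec G
  obtain ⟨R, ℓ, φ, hP, hcov⟩ := exists_schreier_transversal H S hS
  have hR : IsComplement (H : Set G) (R : Set G) := by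
    rw [isComplement_iff_existsUnique_mul_inv_mem]
    intro g
    obtain ⟨r, hr, hgr⟩ := hcov g
    refine ⟨⟨r, by exact_mod_cast hr⟩, hgr, ?_⟩
    rintro ⟨r', hr'⟩ hgr'
    have hmem : r' * r⁻¹ ∈ H := by
      have h1 := H.mul_mem (H.inv_mem hgr') hgr
      have h2 : (g * r'⁻¹)⁻¹ * (g * r⁻¹) = r' * r⁻¹ := by group
      rwa [h2] at h1
    exact Subtype.ext (hP.2.1 r' (by exact_mod_cast hr') r hr hmem)
  have h1R : (1 : G) ∈ R := hP.1
  have hfix : ∀ r ∈ R, (IsComplement.toRightFun hR r : G) = r := by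
    intro r hr
    have hu := (isComplement_iff_existsUnique_mul_inv_mem.mp hR r).unique
      (IsComplement.mul_inv_toRightFun_mem hR r)
      (show r * ((⟨r, by exact_mod_cast hr⟩ : (R : Set G)) : G)⁻¹ ∈ H by
        simpa using H.one_mem)
    exact congrArg Subtype.val hu
  have htriv : ∀ g : G, g * (IsComplement.toRightFun hR g : G)⁻¹ = 1 ↔ g ∈ R := by
    intro g
    constructor
    · intro h
      have hg : g = (IsComplement.toRightFun hR g : G) := by rwa [mul_inv_eq_one] at h
      rw [hg]
      exact_mod_cast (IsComplement.toRightFun hR g).2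
    · intro h
      rw [hfix g h, mul_inv_cancel]
  set T : Finset ↥H := (R * S).image fun g =>
    (⟨g * (IsComplement.toRightFun hR g : G)⁻¹,
      IsComplement.mul_inv_toRightFun_mem hR g⟩ : ↥H) with hT
  have hTtop : closure (T : Set ↥H) = ⊤ := closure_mul_image_eq_top' hR h1R hS
  set T' := T.erase 1 with hT'
  have hT'top : closure (T' : Set ↥H) = ⊤ := by
    rw [eq_top_iff, ← hTtop]
    refine (closure_le _).mpr ?_
    intro t ht
    rcases eq_or_ne t 1 with rfl | htne
    · exact one_mem _
    · exact subset_closure (Finset.mem_coe.mpr (Finset.mem_erase.mpr ⟨htne, ht⟩))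
  set Pg := (R ×ˢ S).filter (fun p : G × G => p.1 * p.2 ∈ R) with hPg
  set Pb := (R ×ˢ S).filter (fun p : G × G => p.1 * p.2 ∉ R) with hPb
  have hsubset : T' ⊆ Pb.image (fun p : G × G =>
      (⟨p.1 * p.2 * (IsComplement.toRightFun hR (p.1 * p.2) : G)⁻¹,
        IsComplement.mul_inv_toRightFun_mem hR _⟩ : ↥H)) := by
    intro t ht
    obtain ⟨htne, htT⟩ := Finset.mem_erase.mp ht
    obtain ⟨g, hg, rfl⟩ := Finset.mem_image.mp htT
    obtain ⟨a, haR, s, hsS, rfl⟩ := Finset.mem_mul.mp hg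
    refine Finset.mem_image.mpr ⟨(a, s), ?_, rfl⟩
    refine Finset.mem_filter.mpr ⟨Finset.mem_product.mpr ⟨haR, hsS⟩, ?_⟩
    intro hmem
    apply htne
    apply Subtype.ext
    simpa using (htriv (a * s)).mpr hmem
  have hc1 : Group.rank ↥H ≤ Pb.card :=
    (Group.rank_le hT'top).trans ((Finset.card_le_card hsubset).trans Finset.card_image_le)
  have hc2 : Pg.card + Pb.card = R.card * S.card := by
    rw [← Finset.card_product R S]
    exact Finset.card_filter_add_card_filter_not _
  have hc3 : (R.erase 1).card ≤ Pg.card := by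
    apply Finset.card_le_card_of_injOn φ
    · intro r hr
      obtain ⟨hrne, hrR⟩ := Finset.mem_erase.mp hr
      obtain ⟨k1, k2, k3, _⟩ := hP.2.2 r hrR hrne
      exact Finset.mem_filter.mpr ⟨Finset.mem_product.mpr ⟨k1, k2⟩, k3⟩
    · intro r hr r' hr' heq
      rw [Finset.mem_coe, Finset.mem_erase] at hr hr'
      obtain ⟨k1, k2, k3, k4⟩ := hP.2.2 r hr.2 hr.1
      obtain ⟨l1, l2, l3, l4⟩ := hP.2.2 r' hr'.2 hr'.1
      rw [heq] at k4
      rcases k4 with ⟨ke, kl⟩ | ⟨ke, kl⟩ <;> rcases l4 with ⟨le', ll⟩ | ⟨le', ll⟩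
      · exact ke.symm.trans le'
      · rw [ke] at ll
        rw [le'] at kl
        omega
      · rw [le'] at kl
        rw [ke] at ll
        omega
      · exact ke.symm.trans le'
  have hcR : R.card = H.index := by
    have hcard := hR.card_right
    rwa [Nat.card_coe_set_eq, Set.ncard_coe_finset] at hcard
  have hc4 : (R.erase 1).card = R.card - 1 := Finset.card_erase_of_mem h1R
  have hc5 : 1 ≤ R.card := Finset.card_pos.mpr ⟨1, h1R⟩
  rw [hScard] at hc2
  rw [← hcR]
  generalize R.card * Group.rank G = M at hc2 ⊢
  omega

/-- If `(Q n)` is a sequence of finite-index subgroups of a finitely generated group `G`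
that is cofinal among finite-index subgroups and satisfies `d(Q n) - 1 ≥ r·[G : Q n]`,
then `d(H) - 1 ≥ r·[G : H]` for every finite-index subgroup `H ≤ G`. -/
theorem rank_gradient_ge_of_cofinal_sequence
    {G : Type*} [Group G] (hFG : Group.FG G) (r : ℝ) (hr : 0 ≤ r)
    (Q : ℕ → Subgroup G) (hfi : ∀ n, (Q n).FiniteIndex)
    (hcof : ∀ H : Subgroup G, H.FiniteIndex → ∃ n, Q n ≤ H)
    (hrank : ∀ n, (minGens ↥(Q n) : ℝ) - 1 ≥ r * ((Q n).index : ℝ)) :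
    ∀ H : Subgroup G, H.FiniteIndex → (minGens ↥H : ℝ) - 1 ≥ r * (H.index : ℝ) := by
  classical
  haveI := hFG
  intro H hH
  haveI := hH
  obtain ⟨n, hn⟩ := hcof H hH
  haveI := hfi n
  have hidx : ((Q n).subgroupOf H).index * H.index = (Q n).index :=
    Subgroup.relIndex_mul_index hn
  haveI hKfi : ((Q n).subgroupOf H).FiniteIndex := by
    constructor
    intro h0
    apply (hfi n).index_ne_zero
    rw [← hidx, h0, zero_mul]
  haveI : Group.FG ↥H := Subgroup.fg_of_index_ne_zero H
  haveI : Group.FG ↥((Q n).subgroupOf H) := Subgroup.fg_of_index_ne_zero _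
  haveI : Group.FG ↥(Q n) := Subgroup.fg_of_index_ne_zero _
  have hs := rank_schreier ((Q n).subgroupOf H)
  have he : Group.rank ↥((Q n).subgroupOf H) = Group.rank ↥(Q n) :=
    rank_eq_of_mulEquiv (Subgroup.subgroupOfEquivOfLe hn)
  have h1 : minGens ↥(Q n) = Group.rank ↥(Q n) := minGens_eq_rank _
  have h2 : minGens ↥H = Group.rank ↥H := minGens_eq_rank _
  set m := ((Q n).subgroupOf H).index with hm
  have hm0 : 0 < m := Nat.pos_of_ne_zero hKfi.index_ne_zero
  have hq := hrank n
  have hnat : minGens ↥(Q n) + m ≤ m * minGens ↥H + 1 := by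
    rw [h1, h2, ← he]
    exact hs
  have hnatR : (minGens ↥(Q n) : ℝ) + (m : ℝ) ≤ (m : ℝ) * (minGens ↥H : ℝ) + 1 := by
    exact_mod_cast hnat
  have c2 : (minGens ↥(Q n) : ℝ) - 1 ≤ (m : ℝ) * ((minGens ↥H : ℝ) - 1) := by
    have hexp : (m : ℝ) * ((minGens ↥H : ℝ) - 1) = (m : ℝ) * (minGens ↥H : ℝ) - m := by
      ring
    rw [hexp]
    linarith
  have c1 : (m : ℝ) * (r * (H.index : ℝ)) = r * ((Q n).index : ℝ) := by
    rw [← hidx]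
    push_cast
    ring
  have key : (m : ℝ) * (r * (H.index : ℝ)) ≤ (m : ℝ) * ((minGens ↥H : ℝ) - 1) := by
    rw [c1]
    exact le_trans hq c2
  have hmR : (0 : ℝ) < (m : ℝ) := by exact_mod_cast hm0
  exact le_of_mul_le_mul_left key hmR
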